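/- With the ICW exchangeable pair construction, E[|1 − (1/(2λ))·E[(X_n − X'_n)² + c·σ²·(X_n − X'_n)·(X̃_n − X̃'_n) | F_n]|] ≤ E[|R_3 + R_4 + R_5 + R̂_3 + R̂_4 + R̂_5|], where R_3 := (1/χ_n)·(1/n)∑_i σ_i·(tanh(t_i*) − tanh((β w_i/E[W_n])·m̃_n^i + h)), R_4 := (1/χ_n)·(1/n)∑_i tanh(t_i*)·(tanh(t_i*) − E_{μ_n}[σ_i]), R_5 := (1/χ_n)·(1/n)∑_i tanh(t_i*)·(E_{μ_n}[σ_i] − σ_i), R̂_3 := (c·σ²/√(χ_n·χ̃_n))·(1/n)∑_i w_i·σ_i·(tanh(t_i*) − tanh((β w_i/E[W_n])·m̃_n^i + h)), R̂_4 := (c·σ²/√(χ_n·χ̃_n))·(1/n)∑_i w_i·tanh(t_i*)·(tanh(t_i*) − E_{μ_n}[σ_i]), R̂_5 := (c·σ²/√(χ_n·χ̃_n))·(1/n)∑_i w_i·tanh(t_i*)·(E_{μ_n}[σ_i] − σ_i). -/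

import Mathlib

open Real BigOperators Finset MeasureTheory Filter ProbabilityTheory Topology

noncomputable section

namespace ICW

/-- The real spin value associated to a Boolean: `true ↦ 1`, `false ↦ -1`. -/
def spin (b : Bool) : ℝ := if b then 1 else -1

/-- `E[W_n^k] = (1/n) ∑_i w_i^k`. -/
def EWk (n : ℕ) (w : Fin n → ℝ) (k : ℕ) : ℝ := (1 / n : ℝ) * ∑ i, (w i) ^ k

/-- `E[W_n] = (1/n) ∑_i w_i`. -/
def EW (n : ℕ) (w : Fin n → ℝ) : ℝ := (1 / n : ℝ) * ∑ i, w i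

/-- The (negative) Hamiltonian of the inhomogeneous Curie–Weiss model. -/
def ham (n : ℕ) (w : Fin n → ℝ) (β h : ℝ) (σ : Fin n → Bool) : ℝ :=
  β / (2 * ∑ i, w i) * (∑ i, w i * spin (σ i)) ^ 2 + h * ∑ i, spin (σ i)

/-- Unnormalized Boltzmann–Gibbs weight. -/
def wt (n : ℕ) (w : Fin n → ℝ) (β h : ℝ) (σ : Fin n → Bool) : ℝ :=
  Real.exp (ham n w β h σ)

/-- Partition function `Z_n`. -/
def Z (n : ℕ) (w : Fin n → ℝ) (β h : ℝ) : ℝ := ∑ σ : Fin n → Bool, wt n w β h σ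

/-- Expectation under the ICW measure `μ_n`. -/
def icwE (n : ℕ) (w : Fin n → ℝ) (β h : ℝ) (f : (Fin n → Bool) → ℝ) : ℝ :=
  (∑ σ : Fin n → Bool, wt n w β h σ * f σ) / Z n w β h

open Classical in
/-- Probability of an event under the ICW measure `μ_n`. -/
def icwP (n : ℕ) (w : Fin n → ℝ) (β h : ℝ) (A : (Fin n → Bool) → Prop) : ℝ :=
  icwE n w β h (fun σ => if A σ then 1 else 0)

/-- Magnetization `m_n`. -/
def mn (n : ℕ) (σ : Fin n → Bool) : ℝ := (1 / n : ℝ) * ∑ i, spin (σ i)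

/-- Weighted magnetization `m̃_n`. -/
def mtil (n : ℕ) (w : Fin n → ℝ) (σ : Fin n → Bool) : ℝ :=
  (1 / n : ℝ) * ∑ i, w i * spin (σ i)

/-- Weighted magnetization leaving out spin `i`, `m̃_n^i`. -/
def mtilI (n : ℕ) (w : Fin n → ℝ) (σ : Fin n → Bool) (i : Fin n) : ℝ :=
  (1 / n : ℝ) * ∑ j ∈ Finset.univ.erase i, w j * spin (σ j)

/-- Argument `√(β/E[W_n])·w_i·x + h`. -/
def arg (n : ℕ) (w : Fin n → ℝ) (β h x : ℝ) (i : Fin n) : ℝ :=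
  Real.sqrt (β / EW n w) * w i * x + h

/-- `G_n(x)`. -/
def Gfun (n : ℕ) (w : Fin n → ℝ) (β h : ℝ) (x : ℝ) : ℝ :=
  x ^ 2 / 2 - (1 / n : ℝ) * ∑ i, Real.log (Real.cosh (arg n w β h x i))

/-- `G_n(x; s)` (with tilted argument `x+s`). -/
def GfunS (n : ℕ) (w : Fin n → ℝ) (β h : ℝ) (x s : ℝ) : ℝ :=
  x ^ 2 / 2 - (1 / n : ℝ) * ∑ i, Real.log (Real.cosh (arg n w β h (x + s) i))

/-- `G_n'(x)`. -/
def Gfun' (n : ℕ) (w : Fin n → ℝ) (β h : ℝ) (x : ℝ) : ℝ :=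
  x - (1 / n : ℝ) * ∑ i, Real.sqrt (β / EW n w) * w i * Real.tanh (arg n w β h x i)

/-- `G_n''(x)`. -/
def Gfun'' (n : ℕ) (w : Fin n → ℝ) (β h : ℝ) (x : ℝ) : ℝ :=
  1 - β / EW n w * ((1 / n : ℝ) * ∑ i, (1 - Real.tanh (arg n w β h x i) ^ 2) * (w i) ^ 2)

/-- `x` has the same sign as `h` (and is `0` when `h = 0`). -/
def SameSign (h x : ℝ) : Prop :=
  (0 < h ∧ 0 < x) ∨ (h < 0 ∧ x < 0) ∨ (h = 0 ∧ x = 0)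

/-- `M_n`, defined from a solution `x` of the fixed point equation. -/
def Mn (n : ℕ) (w : Fin n → ℝ) (β h x : ℝ) : ℝ :=
  (1 / n : ℝ) * ∑ i, Real.tanh (arg n w β h x i)

/-- The susceptibility `χ_n`, defined from a solution `x` of the fixed point equation. -/
def chiN (n : ℕ) (w : Fin n → ℝ) (β h x : ℝ) : ℝ :=
  1 - (1 / n : ℝ) * ∑ i, Real.tanh (arg n w β h x i) ^ 2
    + β / EW n w * ((1 / n : ℝ) * ∑ i, (1 - Real.tanh (arg n w β h x i) ^ 2) * w i) ^ 2
      / Gfun'' n w β h x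

/-- `M̃_n`. -/
def Mtil (n : ℕ) (w : Fin n → ℝ) (β x : ℝ) : ℝ := Real.sqrt (EW n w / β) * x

/-- `χ̃_n`. -/
def chiTil (n : ℕ) (w : Fin n → ℝ) (β h x : ℝ) : ℝ :=
  ((1 / n : ℝ) * ∑ i, (1 - Real.tanh (arg n w β h x i) ^ 2) * (w i) ^ 2) / Gfun'' n w β h x

/-- The normalized magnetization `X_n` (as a function of the configuration),
where `x` is the relevant solution of the fixed point equation. -/
def Xn (n : ℕ) (w : Fin n → ℝ) (β h x : ℝ) (σ : Fin n → Bool) : ℝ :=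
  Real.sqrt n * (mn n σ - Mn n w β h x) / Real.sqrt (chiN n w β h x)

/-- The normalized weighted magnetization `X̃_n`. -/
def Xtil (n : ℕ) (w : Fin n → ℝ) (β h x : ℝ) (σ : Fin n → Bool) : ℝ :=
  Real.sqrt n * (mtil n w σ - Mtil n w β x) / Real.sqrt (chiTil n w β h x)

/-- The standard normal cumulative distribution function. -/
def stdGaussCDF (z : ℝ) : ℝ := ((gaussianReal 0 1) (Set.Iic z)).toReal

/-- Kolmogorov distance between the law of `X` under `μ_n` and the standard normal law. -/
def dK (n : ℕ) (w : Fin n → ℝ) (β h : ℝ) (X : (Fin n → Bool) → ℝ) : ℝ :=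
  ⨆ z : ℝ, |icwP n w β h (fun σ => X σ ≤ z) - stdGaussCDF z|

/-- Weight regularity condition (i): the empirical weight distribution converges weakly to
the law `ν` of `W`, which is a probability measure with `E[W] > 0`. -/
def WeightRegI (w : (n : ℕ) → Fin n → ℝ) (ν : Measure ℝ) : Prop :=
  (∀ n i, 0 < w n i) ∧ IsProbabilityMeasure ν ∧
    (∀ f : BoundedContinuousFunction ℝ ℝ,
      Tendsto (fun n : ℕ => (1 / n : ℝ) * ∑ i, f (w n i)) atTop (𝓝 (∫ x, f x ∂ν))) ∧
    Integrable (fun x => x) ν ∧ 0 < ∫ x, x ∂ν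

/-- Weight regularity condition (ii): `E[W_n²] → E[W²] < ∞`. -/
def WeightRegII (w : (n : ℕ) → Fin n → ℝ) (ν : Measure ℝ) : Prop :=
  Integrable (fun x => x ^ 2) ν ∧
    Tendsto (fun n => EWk n (w n) 2) atTop (𝓝 (∫ x, x ^ 2 ∂ν))

/-- Weight regularity condition (iii): `E[W_n³] → E[W³] < ∞`. -/
def WeightRegIII (w : (n : ℕ) → Fin n → ℝ) (ν : Measure ℝ) : Prop :=
  Integrable (fun x => x ^ 3) ν ∧
    Tendsto (fun n => EWk n (w n) 3) atTop (𝓝 (∫ x, x ^ 3 ∂ν))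

/-- The critical inverse temperature `β_c = E[W]/E[W²]`. -/
def betaC (ν : Measure ℝ) : ℝ := (∫ x, x ∂ν) / (∫ x, x ^ 2 ∂ν)

/-- The uniqueness regime `U`. -/
def Uniq (ν : Measure ℝ) (β h : ℝ) : Prop :=
  (0 ≤ β ∧ h ≠ 0) ∨ (0 < β ∧ β < betaC ν ∧ h = 0)

/-- Probability that spin `i` equals `+1` given the remaining spins. -/
def pPlus (n : ℕ) (w : Fin n → ℝ) (β h : ℝ) (σ : Fin n → Bool) (i : Fin n) : ℝ :=
  wt n w β h (Function.update σ i true) /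
    (wt n w β h (Function.update σ i true) + wt n w β h (Function.update σ i false))

/-- Conditional expectation given `F_n` (the σ-algebra generated by `σ`) of a function of
`(σ, I, σ'_I)`, where `I` is uniform on `[n]` and `σ'_I` is resampled from the conditional
distribution of the `I`-th spin given the others. -/
def condAvg (n : ℕ) (w : Fin n → ℝ) (β h : ℝ)
    (f : (Fin n → Bool) → Fin n → Bool → ℝ) (σ : Fin n → Bool) : ℝ :=
  (1 / n : ℝ) * ∑ i, (pPlus n w β h σ i * f σ i true + (1 - pPlus n w β h σ i) * f σ i false)

/-- The increment `X_n − X'_n` as a function of `(σ, I, σ'_I)`. -/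
def XnD (n : ℕ) (w : Fin n → ℝ) (β h x : ℝ) (σ : Fin n → Bool) (i : Fin n) (b : Bool) : ℝ :=
  (spin (σ i) - spin b) / (Real.sqrt n * Real.sqrt (chiN n w β h x))

/-- The increment `X̃_n − X̃'_n` as a function of `(σ, I, σ'_I)`. -/
def XtilD (n : ℕ) (w : Fin n → ℝ) (β h x : ℝ) (σ : Fin n → Bool) (i : Fin n) (b : Bool) : ℝ :=
  w i * (spin (σ i) - spin b) / (Real.sqrt n * Real.sqrt (chiTil n w β h x))

/-- The constant `c` in the regression equation. -/
def cconst (n : ℕ) (w : Fin n → ℝ) (β h x : ℝ) : ℝ :=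
  Real.sqrt (chiTil n w β h x) / Real.sqrt (chiN n w β h x) * (β / EW n w) *
    ((1 / n : ℝ) * ∑ i, (1 - Real.tanh (arg n w β h x i) ^ 2) * w i)

end ICW

namespace ICW

/-- Error term `R_3`. -/
def R3 (n : ℕ) (w : Fin n → ℝ) (β h x : ℝ) (σ : Fin n → Bool) : ℝ :=
  1 / chiN n w β h x * ((1 / n : ℝ) * ∑ i, spin (σ i) *
    (Real.tanh (arg n w β h x i) - Real.tanh (β * w i / EW n w * mtilI n w σ i + h)))

/-- Error term `R_4`. -/
def R4 (n : ℕ) (w : Fin n → ℝ) (β h x : ℝ) : ℝ :=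
  1 / chiN n w β h x * ((1 / n : ℝ) * ∑ i, Real.tanh (arg n w β h x i) *
    (Real.tanh (arg n w β h x i) - icwE n w β h (fun τ => spin (τ i))))

/-- Error term `R_5`. -/
def R5 (n : ℕ) (w : Fin n → ℝ) (β h x : ℝ) (σ : Fin n → Bool) : ℝ :=
  1 / chiN n w β h x * ((1 / n : ℝ) * ∑ i, Real.tanh (arg n w β h x i) *
    (icwE n w β h (fun τ => spin (τ i)) - spin (σ i)))

/-- Error term `R̂_3`. -/
def Rhat3 (n : ℕ) (w : Fin n → ℝ) (β h x : ℝ) (σ : Fin n → Bool) : ℝ :=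
  cconst n w β h x * (1 / Gfun'' n w β h x) / Real.sqrt (chiN n w β h x * chiTil n w β h x) *
    ((1 / n : ℝ) * ∑ i, w i * spin (σ i) *
      (Real.tanh (arg n w β h x i) - Real.tanh (β * w i / EW n w * mtilI n w σ i + h)))

/-- Error term `R̂_4`. -/
def Rhat4 (n : ℕ) (w : Fin n → ℝ) (β h x : ℝ) : ℝ :=
  cconst n w β h x * (1 / Gfun'' n w β h x) / Real.sqrt (chiN n w β h x * chiTil n w β h x) *
    ((1 / n : ℝ) * ∑ i, w i * Real.tanh (arg n w β h x i) *
      (Real.tanh (arg n w β h x i) - icwE n w β h (fun τ => spin (τ i))))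

/-- Error term `R̂_5`. -/
def Rhat5 (n : ℕ) (w : Fin n → ℝ) (β h x : ℝ) (σ : Fin n → Bool) : ℝ :=
  cconst n w β h x * (1 / Gfun'' n w β h x) / Real.sqrt (chiN n w β h x * chiTil n w β h x) *
    ((1 / n : ℝ) * ∑ i, w i * Real.tanh (arg n w β h x i) *
      (icwE n w β h (fun τ => spin (τ i)) - spin (σ i)))


lemma spin_sq (b : Bool) : spin b ^ 2 = 1 := by cases b <;> norm_num [spin]

lemma tanh_sq_lt_one (y : ℝ) : Real.tanh y ^ 2 < 1 := by
  have hc : 0 < Real.cosh y := Real.cosh_pos y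
  have h1 := Real.cosh_sq_sub_sinh_sq y
  rw [Real.tanh_eq_sinh_div_cosh, div_pow, div_lt_one (by positivity)]
  nlinarith

lemma tanh_half_sub (a b : ℝ) :
    Real.tanh ((a - b) / 2) = (Real.exp a - Real.exp b) / (Real.exp a + Real.exp b) := by
  have ha : Real.exp a = Real.exp ((a - b) / 2) ^ 2 * Real.exp b := by
    rw [sq, ← Real.exp_add, ← Real.exp_add]; ring_nf
  rw [Real.tanh_eq_sinh_div_cosh, Real.sinh_eq, Real.cosh_eq, Real.exp_neg, ha]
  have hu : (0:ℝ) < Real.exp ((a - b) / 2) := Real.exp_pos _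
  have hb : (0:ℝ) < Real.exp b := Real.exp_pos _
  set u := Real.exp ((a - b) / 2) with hudef
  have h2 : u ^ 2 * Real.exp b + Real.exp b ≠ 0 := by positivity
  have h3 : u + u⁻¹ ≠ 0 := by positivity
  field_simp

lemma spin_update_sum {n : ℕ} (c : Fin n → ℝ) (σ : Fin n → Bool) (i : Fin n) (b : Bool) :
    ∑ j, c j * spin (Function.update σ i b j)
      = c i * spin b + ∑ j ∈ Finset.univ.erase i, c j * spin (σ j) := by
  rw [← Finset.add_sum_erase _ (fun j => c j * spin (Function.update σ i b j))
    (Finset.mem_univ i), Function.update_self]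
  congr 1
  refine Finset.sum_congr rfl fun j hj => ?_
  rw [Function.update_of_ne (Finset.ne_of_mem_erase hj)]

lemma spin_update_sum' {n : ℕ} (σ : Fin n → Bool) (i : Fin n) (b : Bool) :
    ∑ j, spin (Function.update σ i b j)
      = spin b + ∑ j ∈ Finset.univ.erase i, spin (σ j) := by
  have := spin_update_sum (fun _ => (1:ℝ)) σ i b
  simpa using this

lemma pPlus_eq (n : ℕ) (hn : 0 < n) (w : Fin n → ℝ) (hw : ∀ i, 0 < w i) (β h : ℝ)
    (σ : Fin n → Bool) (i : Fin n) :
    2 * pPlus n w β h σ i - 1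
      = Real.tanh (β * w i / EW n w * mtilI n w σ i + h) := by
  have hL : (0:ℝ) < ∑ j, w j :=
    Finset.sum_pos (fun j _ => hw j) ⟨i, Finset.mem_univ i⟩
  have hn' : ((n:ℝ)) ≠ 0 := Nat.cast_ne_zero.mpr hn.ne'
  have hs : (ham n w β h (Function.update σ i true)
      - ham n w β h (Function.update σ i false)) / 2
      = β * w i / EW n w * mtilI n w σ i + h := by
    unfold ham
    rw [spin_update_sum w σ i true, spin_update_sum w σ i false,
      spin_update_sum' σ i true, spin_update_sum' σ i false]
    show _ = β * w i / EW n w * mtilI n w σ i + h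
    unfold EW mtilI
    simp only [spin]
    norm_num
    field_simp
    ring
  have hexp : (0:ℝ) < Real.exp (ham n w β h (Function.update σ i true))
      + Real.exp (ham n w β h (Function.update σ i false)) := by positivity
  have hp : pPlus n w β h σ i
      = Real.exp (ham n w β h (Function.update σ i true))
        / (Real.exp (ham n w β h (Function.update σ i true))
          + Real.exp (ham n w β h (Function.update σ i false))) := rfl
  rw [hp, ← hs, tanh_half_sub]
  field_simp
  ring

lemma site_avg (n : ℕ) (hn : 0 < n) (w : Fin n → ℝ) (hw : ∀ i, 0 < w i) (β h : ℝ)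
    (σ : Fin n → Bool) (i : Fin n) (r : ℝ) :
    pPlus n w β h σ i * ((spin (σ i) - spin true) ^ 2 * r)
      + (1 - pPlus n w β h σ i) * ((spin (σ i) - spin false) ^ 2 * r)
    = (2 - 2 * spin (σ i) * Real.tanh (β * w i / EW n w * mtilI n w σ i + h)) * r := by
  have hp := pPlus_eq n hn w hw β h σ i
  have hs : spin (σ i) ^ 2 = 1 := spin_sq _
  have e1 : spin true = (1:ℝ) := rfl
  have e2 : spin false = (-1:ℝ) := rfl
  rw [e1, e2]
  linear_combination r * hs - 2 * spin (σ i) * r * hp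


lemma hK_helper (s t A B G2 χ : ℝ) (hs : s * s = χ) (hs0 : s ≠ 0) (ht0 : t ≠ 0)
    (hG2 : G2 ≠ 0) :
    t / s * A * B * (1 / G2) / (s * t) * χ = A * B * (1 / G2) := by
  field_simp
  linear_combination (-(A * B)) * hs

lemma hfb_helper (d C sn s t nr χ wi : ℝ) (hsn : sn * sn = nr) (hs : s * s = χ)
    (hsn0 : sn ≠ 0) (hs0 : s ≠ 0) (ht0 : t ≠ 0) :
    (d / (sn * s)) ^ 2 + C * (d / (sn * s) * (wi * d / (sn * t)))
      = d ^ 2 * (1 / (nr * χ) + C / (s * t) * wi / nr) := by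
  have hnr : nr ≠ 0 := by rw [← hsn]; exact mul_ne_zero hsn0 hsn0
  have hχ0 : χ ≠ 0 := by rw [← hs]; exact mul_ne_zero hs0 hs0
  field_simp
  linear_combination (-(d^2*(t+s*C*wi)*χ)) * hsn
    + (-(d^2*sn^2*t)) * hs


lemma scalar_key (nr c K bD G Q1 Q2 L U Uw S3 S4 S5 T3 T4 T5 : ℝ)
    (hn : nr ≠ 0) (hc : c ≠ 0)
    (hceq : c = 1 - 1 / nr * Q1 + bD * (1 / nr * (L - Q2)) ^ 2 / G)
    (hKeq : K * c = bD * (1 / nr * (L - Q2)) * (1 / G))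
    (hc1 : S3 + S4 + S5 = Q1 - U)
    (hc2 : T3 + T4 + T5 = Q2 - Uw) :
    1 - nr / 2 * (1 / nr * ((2 * nr - 2 * U) * (1 / (nr * c)) + (2 * L - 2 * Uw) * (K / nr)))
      = -(1 / c * (1 / nr * S3) + 1 / c * (1 / nr * S4) + 1 / c * (1 / nr * S5)
          + K * (1 / nr * T3) + K * (1 / nr * T4) + K * (1 / nr * T5)) := by
  have h1 : S3 = Q1 - U - S4 - S5 := by linarith
  have h2 : T3 = Q2 - Uw - T4 - T5 := by linarith
  subst h1 h2
  have h3 : bD * (1 / nr * (L - Q2)) ^ 2 / G = K * c * (1 / nr * (L - Q2)) := by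
    linear_combination (-(1 / nr) * (L - Q2)) * hKeq
  rw [h3] at hceq
  have main : c * nr = nr - Q1 + K * c * (L - Q2) := by
    field_simp at hceq
    linear_combination hceq
  field_simp
  linear_combination main

/-- **Bound on the first Stein term** for the ICW exchangeable pair, with `λ = 1/n` and
`σ² = 1/G_n''(x_n*)`; the conditional expectation given `F_n` is the average over the
uniformly chosen coordinate `I` and the resampled spin `σ'_I`. -/
theorem first_stein_term_bound (n : ℕ) (hn : 0 < n) (w : Fin n → ℝ) (hw : ∀ i, 0 < w i)
    (β h : ℝ) (hβ : 0 < β) (x : ℝ) (hx : Gfun' n w β h x = 0) (hsign : SameSign h x)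
    (hG'' : 0 < Gfun'' n w β h x) :
    icwE n w β h (fun σ => |1 - (n : ℝ) / 2 * condAvg n w β h (fun τ i b =>
        XnD n w β h x τ i b ^ 2 + cconst n w β h x * (1 / Gfun'' n w β h x) *
          (XnD n w β h x τ i b * XtilD n w β h x τ i b)) σ|)
      ≤ icwE n w β h (fun σ => |R3 n w β h x σ + R4 n w β h x + R5 n w β h x σ
          + Rhat3 n w β h x σ + Rhat4 n w β h x + Rhat5 n w β h x σ|) := by
  classical
  have hn' : ((n : ℝ)) ≠ 0 := Nat.cast_ne_zero.mpr hn.ne'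
  have hnpos : (0 : ℝ) < n := by exact_mod_cast hn
  have hne : (Finset.univ : Finset (Fin n)).Nonempty := ⟨⟨0, hn⟩, Finset.mem_univ _⟩
  have hEW : 0 < EW n w := by
    unfold EW
    exact mul_pos (by positivity) (Finset.sum_pos (fun j _ => hw j) hne)
  have hQ1lt : (1 / n : ℝ) * ∑ i, Real.tanh (arg n w β h x i) ^ 2 < 1 := by
    have h1 : ∑ i, Real.tanh (arg n w β h x i) ^ 2 < ∑ _i : Fin n, (1 : ℝ) :=
      Finset.sum_lt_sum_of_nonempty hne (fun i _ => tanh_sq_lt_one _)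
    have h2 : ∑ _i : Fin n, (1 : ℝ) = n := by simp
    calc (1 / n : ℝ) * ∑ i, Real.tanh (arg n w β h x i) ^ 2
        < (1 / n : ℝ) * n := by
          apply mul_lt_mul_of_pos_left _ (by positivity)
          rw [← h2]; exact h1
      _ = 1 := by field_simp
  have hχ : 0 < chiN n w β h x := by
    have h3 : 0 ≤ β / EW n w *
        ((1 / n : ℝ) * ∑ i, (1 - Real.tanh (arg n w β h x i) ^ 2) * w i) ^ 2
        / Gfun'' n w β h x :=
      div_nonneg (mul_nonneg (div_nonneg hβ.le hEW.le) (sq_nonneg _)) hG''.le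
    unfold chiN
    linarith [hQ1lt]
  have hχt : 0 < chiTil n w β h x := by
    unfold chiTil
    apply div_pos _ hG''
    apply mul_pos (by positivity)
    refine Finset.sum_pos (fun i _ => mul_pos ?_ (pow_pos (hw i) 2)) hne
    nlinarith [tanh_sq_lt_one (arg n w β h x i)]
  have hsχ : 0 < Real.sqrt (chiN n w β h x) := Real.sqrt_pos.mpr hχ
  have hsχt : 0 < Real.sqrt (chiTil n w β h x) := Real.sqrt_pos.mpr hχt
  have hmχ : Real.sqrt (chiN n w β h x) * Real.sqrt (chiN n w β h x) = chiN n w β h x :=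
    Real.mul_self_sqrt hχ.le
  have hsn : Real.sqrt (n : ℝ) * Real.sqrt (n : ℝ) = (n : ℝ) :=
    Real.mul_self_sqrt hnpos.le
  have hsqm : Real.sqrt (chiN n w β h x * chiTil n w β h x)
      = Real.sqrt (chiN n w β h x) * Real.sqrt (chiTil n w β h x) :=
    Real.sqrt_mul hχ.le _
  have hD0 : ∑ i, (1 - Real.tanh (arg n w β h x i) ^ 2) * w i
      = (∑ i, w i) - ∑ i, w i * Real.tanh (arg n w β h x i) ^ 2 := by
    rw [← Finset.sum_sub_distrib]
    exact Finset.sum_congr rfl fun i _ => by ring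
  have hχeq : chiN n w β h x = 1 - (1 / n : ℝ) * ∑ i, Real.tanh (arg n w β h x i) ^ 2
      + β / EW n w * ((1 / n : ℝ) *
          ((∑ i, w i) - ∑ i, w i * Real.tanh (arg n w β h x i) ^ 2)) ^ 2
        / Gfun'' n w β h x := by
    unfold chiN; rw [hD0]
  have hK : cconst n w β h x * (1 / Gfun'' n w β h x)
        / (Real.sqrt (chiN n w β h x) * Real.sqrt (chiTil n w β h x)) * chiN n w β h x
      = β / EW n w * ((1 / n : ℝ) *
          ((∑ i, w i) - ∑ i, w i * Real.tanh (arg n w β h x i) ^ 2))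
        * (1 / Gfun'' n w β h x) := by
    unfold cconst
    rw [hD0]
    exact hK_helper _ _ _ _ _ _ hmχ hsχ.ne' hsχt.ne' hG''.ne' 
  refine le_of_eq ?_
  unfold icwE
  congr 1
  refine Finset.sum_congr rfl fun σ _ => ?_
  congr 1
  beta_reduce
  have hfb : (fun (τ : Fin n → Bool) (i : Fin n) (b : Bool) =>
      XnD n w β h x τ i b ^ 2 + cconst n w β h x * (1 / Gfun'' n w β h x) *
        (XnD n w β h x τ i b * XtilD n w β h x τ i b))
    = fun τ i b => (spin (τ i) - spin b) ^ 2 *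
        (1 / ((n : ℝ) * chiN n w β h x) + cconst n w β h x * (1 / Gfun'' n w β h x)
          / (Real.sqrt (chiN n w β h x) * Real.sqrt (chiTil n w β h x)) * w i / (n : ℝ)) := by
    funext τ i b
    unfold XnD XtilD
    exact hfb_helper _ _ _ _ _ _ _ _ hsn hmχ (by positivity) hsχ.ne' hsχt.ne' 
  have hca2 : ∑ i, (pPlus n w β h σ i * ((spin (σ i) - spin true) ^ 2 *
        (1 / ((n : ℝ) * chiN n w β h x) + cconst n w β h x * (1 / Gfun'' n w β h x)
          / (Real.sqrt (chiN n w β h x) * Real.sqrt (chiTil n w β h x)) * w i / (n : ℝ)))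
      + (1 - pPlus n w β h σ i) * ((spin (σ i) - spin false) ^ 2 *
        (1 / ((n : ℝ) * chiN n w β h x) + cconst n w β h x * (1 / Gfun'' n w β h x)
          / (Real.sqrt (chiN n w β h x) * Real.sqrt (chiTil n w β h x)) * w i / (n : ℝ))))
      = ∑ i, (2 - 2 * spin (σ i) * Real.tanh (β * w i / EW n w * mtilI n w σ i + h)) *
          (1 / ((n : ℝ) * chiN n w β h x) + cconst n w β h x * (1 / Gfun'' n w β h x)
            / (Real.sqrt (chiN n w β h x) * Real.sqrt (chiTil n w β h x)) * w i / (n : ℝ)) :=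
    Finset.sum_congr rfl fun i _ => site_avg n hn w hw β h σ i _
  have hsum : ∑ i, (2 - 2 * spin (σ i) * Real.tanh (β * w i / EW n w * mtilI n w σ i + h)) *
        (1 / ((n : ℝ) * chiN n w β h x) + cconst n w β h x * (1 / Gfun'' n w β h x)
          / (Real.sqrt (chiN n w β h x) * Real.sqrt (chiTil n w β h x)) * w i / (n : ℝ))
      = (2 * (n : ℝ) - 2 * ∑ i, spin (σ i) * Real.tanh (β * w i / EW n w * mtilI n w σ i + h))
          * (1 / ((n : ℝ) * chiN n w β h x))
        + (2 * ∑ i, w i - 2 * ∑ i, w i * spin (σ i) *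
            Real.tanh (β * w i / EW n w * mtilI n w σ i + h))
          * (cconst n w β h x * (1 / Gfun'' n w β h x)
            / (Real.sqrt (chiN n w β h x) * Real.sqrt (chiTil n w β h x)) / (n : ℝ)) := by
    rw [Finset.sum_congr rfl (fun i _ => (by ring :
      (2 - 2 * spin (σ i) * Real.tanh (β * w i / EW n w * mtilI n w σ i + h)) *
        (1 / ((n : ℝ) * chiN n w β h x) + cconst n w β h x * (1 / Gfun'' n w β h x)
          / (Real.sqrt (chiN n w β h x) * Real.sqrt (chiTil n w β h x)) * w i / (n : ℝ))
      = 2 * (1 / ((n : ℝ) * chiN n w β h x))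
        - spin (σ i) * Real.tanh (β * w i / EW n w * mtilI n w σ i + h) *
            (2 * (1 / ((n : ℝ) * chiN n w β h x)))
        + w i * (2 * (cconst n w β h x * (1 / Gfun'' n w β h x)
            / (Real.sqrt (chiN n w β h x) * Real.sqrt (chiTil n w β h x)) / (n : ℝ)))
        - w i * spin (σ i) * Real.tanh (β * w i / EW n w * mtilI n w σ i + h) *
            (2 * (cconst n w β h x * (1 / Gfun'' n w β h x)
              / (Real.sqrt (chiN n w β h x) * Real.sqrt (chiTil n w β h x)) / (n : ℝ)))))]
    simp only [Finset.sum_add_distrib, Finset.sum_sub_distrib, ← Finset.sum_mul,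
      Finset.sum_const, Finset.card_univ, Fintype.card_fin, nsmul_eq_mul]
    ring
  have hc1 : (∑ i, spin (σ i) * (Real.tanh (arg n w β h x i)
          - Real.tanh (β * w i / EW n w * mtilI n w σ i + h)))
      + (∑ i, Real.tanh (arg n w β h x i) * (Real.tanh (arg n w β h x i)
          - icwE n w β h fun τ => spin (τ i)))
      + (∑ i, Real.tanh (arg n w β h x i) *
          ((icwE n w β h fun τ => spin (τ i)) - spin (σ i)))
      = (∑ i, Real.tanh (arg n w β h x i) ^ 2)
        - ∑ i, spin (σ i) * Real.tanh (β * w i / EW n w * mtilI n w σ i + h) := by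
    rw [← Finset.sum_add_distrib, ← Finset.sum_add_distrib, ← Finset.sum_sub_distrib]
    exact Finset.sum_congr rfl fun i _ => by ring
  have hc2 : (∑ i, w i * spin (σ i) * (Real.tanh (arg n w β h x i)
          - Real.tanh (β * w i / EW n w * mtilI n w σ i + h)))
      + (∑ i, w i * Real.tanh (arg n w β h x i) * (Real.tanh (arg n w β h x i)
          - icwE n w β h fun τ => spin (τ i)))
      + (∑ i, w i * Real.tanh (arg n w β h x i) *
          ((icwE n w β h fun τ => spin (τ i)) - spin (σ i)))
      = (∑ i, w i * Real.tanh (arg n w β h x i) ^ 2)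
        - ∑ i, w i * spin (σ i) * Real.tanh (β * w i / EW n w * mtilI n w σ i + h) := by
    rw [← Finset.sum_add_distrib, ← Finset.sum_add_distrib, ← Finset.sum_sub_distrib]
    exact Finset.sum_congr rfl fun i _ => by ring
  have key : (1 : ℝ) - (n : ℝ) / 2 * condAvg n w β h (fun τ i b =>
      XnD n w β h x τ i b ^ 2 + cconst n w β h x * (1 / Gfun'' n w β h x) *
        (XnD n w β h x τ i b * XtilD n w β h x τ i b)) σ
      = -(R3 n w β h x σ + R4 n w β h x + R5 n w β h x σ
          + Rhat3 n w β h x σ + Rhat4 n w β h x + Rhat5 n w β h x σ) := by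
    rw [hfb]
    simp only [condAvg]
    rw [hca2, hsum]
    unfold R3 R4 R5 Rhat3 Rhat4 Rhat5
    rw [hsqm]
    linear_combination scalar_key (n : ℝ) (chiN n w β h x)
      (cconst n w β h x * (1 / Gfun'' n w β h x)
        / (Real.sqrt (chiN n w β h x) * Real.sqrt (chiTil n w β h x)))
      (β / EW n w) (Gfun'' n w β h x)
      (∑ i, Real.tanh (arg n w β h x i) ^ 2)
      (∑ i, w i * Real.tanh (arg n w β h x i) ^ 2)
      (∑ i, w i)
      (∑ i, spin (σ i) * Real.tanh (β * w i / EW n w * mtilI n w σ i + h))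
      (∑ i, w i * spin (σ i) * Real.tanh (β * w i / EW n w * mtilI n w σ i + h))
      (∑ i, spin (σ i) * (Real.tanh (arg n w β h x i)
          - Real.tanh (β * w i / EW n w * mtilI n w σ i + h)))
      (∑ i, Real.tanh (arg n w β h x i) * (Real.tanh (arg n w β h x i)
          - icwE n w β h fun τ => spin (τ i)))
      (∑ i, Real.tanh (arg n w β h x i) *
          ((icwE n w β h fun τ => spin (τ i)) - spin (σ i)))
      (∑ i, w i * spin (σ i) * (Real.tanh (arg n w β h x i)
          - Real.tanh (β * w i / EW n w * mtilI n w σ i + h)))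
      (∑ i, w i * Real.tanh (arg n w β h x i) * (Real.tanh (arg n w β h x i)
          - icwE n w β h fun τ => spin (τ i)))
      (∑ i, w i * Real.tanh (arg n w β h x i) *
          ((icwE n w β h fun τ => spin (τ i)) - spin (σ i)))
      hn' hχ.ne' hχeq hK hc1 hc2
  rw [key, abs_neg]


end ICW
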